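/- Let q > p ≥ 3 be integers with q/p < 2 (i.e. q < 2p), let f = x^q − y^p ∈ R, and let 0 ≤ α ≤ 1 be rational. Then γ_α^{es}(f) ≥ 2·(q − 1 + α)². -/

import Mathlib

open MvPowerSeries

noncomputable section

/-- `R = ℂ⟦x,y⟧`, the ring of formal power series in two variables over `ℂ`. -/
abbrev R2 : Type := MvPowerSeries (Fin 2) ℂ

/-- The maximal ideal `m = ⟨x, y⟩` of `ℂ⟦x,y⟧`. -/
def mm : Ideal R2 := Ideal.span {X 0, X 1}

/-- `dim_ℂ R/I` as an extended natural number. -/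
def edim (I : Ideal R2) : ℕ∞ := Cardinal.toENat (Module.rank ℂ (R2 ⧸ I))

/-- `dim_ℂ R/I` as a natural number (junk value `0` when infinite). -/
def fdim (I : Ideal R2) : ℕ := (edim I).toNat

/-- The formal partial derivative of a power series with respect to the `i`-th variable. -/
def pd (i : Fin 2) (f : R2) : R2 :=
  fun d => ((d i : ℂ) + 1) * coeff (d + Finsupp.single i 1) f

/-- The Tjurina ideal `I^{ea}(f) = ⟨∂f/∂x, ∂f/∂y, f⟩`. -/
def Tjurina (f : R2) : Ideal R2 := Ideal.span {pd 0 f, pd 1 f, f}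

/-- The intersection multiplicity `i(f,g) = dim_ℂ R/⟨f,g⟩ ∈ ℕ ∪ {∞}`. -/
def interNum (f g : R2) : ℕ∞ := edim (Ideal.span {f, g})

/-- `λ_α(f;I,g) = (α·i(f,g) + (1−α)·dim_ℂ(R/I))² / (i(f,g) − dim_ℂ(R/I))`. -/
def lam (α : ℚ) (f : R2) (I : Ideal R2) (g : R2) : ℝ :=
  ((α : ℝ) * ((interNum f g).toNat : ℝ) + (1 - (α : ℝ)) * (fdim I : ℝ)) ^ 2 /
    (((interNum f g).toNat : ℝ) - (fdim I : ℝ))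

/-- `γ_α(f;I) = max({(1+α)²·dim_ℂ(R/I)} ∪ {λ_α(f;I,g) : g ∈ I, i(f,g) ≤ 2·dim_ℂ(R/I)})`. -/
def gam (α : ℚ) (f : R2) (I : Ideal R2) : ℝ :=
  sSup ({(1 + (α : ℝ)) ^ 2 * (fdim I : ℝ)} ∪
    {x : ℝ | ∃ g ∈ I, interNum f g ≤ 2 * edim I ∧ x = lam α f I g})

/-- A complete intersection ideal: zero-dimensional and generated by two elements. -/
def IsCI (I : Ideal R2) : Prop := edim I < ⊤ ∧ ∃ a b : R2, I = Ideal.span {a, b}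

/-- `γ_α^{ea}(f) = max({0} ∪ {γ_α(f;I) : I a complete intersection ideal,
`I^{ea}(f) ⊆ I ⊆ m`})`. -/
def gamEA (α : ℚ) (f : R2) : ℝ :=
  sSup ({0} ∪ {x : ℝ | ∃ I : Ideal R2, IsCI I ∧ Tjurina f ≤ I ∧ I ≤ mm ∧ x = gam α f I})

/-- The monomial ideal `⟨x^β y^γ : βp + γq ≥ pq⟩`. -/
def wIdeal (p q : ℕ) : Ideal R2 :=
  Ideal.span {s : R2 | ∃ β γ : ℕ, p * q ≤ p * β + q * γ ∧ s = X 0 ^ β * X 1 ^ γ}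

/-- The equisingularity ideal `E(f) = ⟨∂f/∂x, ∂f/∂y⟩ + ⟨x^β y^γ : βp + γq ≥ pq⟩` of a
convenient semi-quasihomogeneous power series of `(p,q)`-order `pq`. -/
def Esing (p q : ℕ) (f : R2) : Ideal R2 := Ideal.span {pd 0 f, pd 1 f} ⊔ wIdeal p q

/-- `γ_α^{es}(f) = max({0} ∪ {γ_α(f;I) : I a complete intersection ideal, E(f) ⊆ I ⊆ m})`. -/
def gamES (p q : ℕ) (α : ℚ) (f : R2) : ℝ :=
  sSup ({0} ∪ {x : ℝ | ∃ I : Ideal R2, IsCI I ∧ Esing p q f ≤ I ∧ I ≤ mm ∧ x = gam α f I})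

/-- The `(p,q)`-leading form of `f`: the sum of the terms of `(p,q)`-degree `pq`. -/
def leadForm (p q : ℕ) (f : R2) : R2 :=
  fun d => if p * d 0 + q * d 1 = p * q then coeff d f else 0

/-- `f` is convenient semi-quasihomogeneous w.r.t. `(p,q)` with `ord_{(p,q)}(f) = pq`:
all terms have weighted degree at least `pq`, the `(p,q)`-leading form is reduced
(squarefree), and the coefficients of `x^q` and `y^p` are nonzero. -/
def IsConvSQH (p q : ℕ) (f : R2) : Prop :=
  (∀ d : Fin 2 →₀ ℕ, coeff d f ≠ 0 → p * q ≤ p * d 0 + q * d 1) ∧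
  Squarefree (leadForm p q f) ∧
  coeff (Finsupp.single 0 q) f ≠ 0 ∧ coeff (Finsupp.single 1 p) f ≠ 0

/-! ### Auxiliary lemmas -/

lemma fin2_decomp (d : Fin 2 →₀ ℕ) :
    d = Finsupp.single 0 (d 0) + Finsupp.single 1 (d 1) := by
  ext x
  fin_cases x <;> simp [Finsupp.single_apply]

lemma mem_span_pow_iff (a b : ℕ) (f : R2) :
    f ∈ Ideal.span {(X 0 ^ a : R2), X 1 ^ b} ↔
      ∀ d : Fin 2 →₀ ℕ, d 0 < a → d 1 < b → coeff d f = 0 := by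
  constructor
  · rintro hf d hd0 hd1
    rw [Ideal.mem_span_pair] at hf
    obtain ⟨u, v, rfl⟩ := hf
    rw [map_add, X_pow_eq, X_pow_eq, coeff_mul_monomial, coeff_mul_monomial,
      if_neg, if_neg, add_zero]
    · intro h
      exact absurd (Finsupp.single_le_iff.mp h) (by omega)
    · intro h
      exact absurd (Finsupp.single_le_iff.mp h) (by omega)
  · intro h
    rw [Ideal.mem_span_pair]
    refine ⟨(id (fun d => coeff (d + Finsupp.single 0 a) f) : R2),
      (id (fun d => if d 0 < a then coeff (d + Finsupp.single 1 b) f else 0) : R2), ?_⟩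
    ext d
    rw [map_add, X_pow_eq, X_pow_eq, mul_comm, mul_comm _ (monomial (Finsupp.single 1 b) 1),
      coeff_monomial_mul, coeff_monomial_mul]
    by_cases h0 : a ≤ d 0
    · rw [if_pos (Finsupp.single_le_iff.mpr h0)]
      have e1 : coeff (d - Finsupp.single 0 a)
          (id (fun d => coeff (d + Finsupp.single 0 a) f) : R2) = coeff d f := by
        show coeff ((d - Finsupp.single 0 a) + Finsupp.single 0 a) f = coeff d f
        rw [tsub_add_cancel_of_le (Finsupp.single_le_iff.mpr h0)]
      rw [e1, one_mul]
      by_cases h2 : b ≤ d 1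
      · rw [if_pos (Finsupp.single_le_iff.mpr h2)]
        have e2 : coeff (d - Finsupp.single 1 b)
            (id (fun d => if d 0 < a then coeff (d + Finsupp.single 1 b) f else 0) : R2) = 0 := by
          show (if (d - Finsupp.single 1 b : Fin 2 →₀ ℕ) 0 < a then _ else (0:ℂ)) = 0
          rw [if_neg]
          simp only [Finsupp.tsub_apply, Finsupp.single_apply]
          simp
          omega
        rw [e2]
        ring
      · rw [if_neg (fun hh => h2 (Finsupp.single_le_iff.mp hh))]
        ring
    · rw [if_neg (fun hh => h0 (Finsupp.single_le_iff.mp hh))]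
      by_cases h2 : b ≤ d 1
      · rw [if_pos (Finsupp.single_le_iff.mpr h2)]
        have e2 : coeff (d - Finsupp.single 1 b)
            (id (fun d => if d 0 < a then coeff (d + Finsupp.single 1 b) f else 0) : R2)
            = coeff d f := by
          show (if (d - Finsupp.single 1 b : Fin 2 →₀ ℕ) 0 < a
            then coeff ((d - Finsupp.single 1 b) + Finsupp.single 1 b) f else (0:ℂ)) = _
          rw [tsub_add_cancel_of_le (Finsupp.single_le_iff.mpr h2), if_pos]
          simp only [Finsupp.tsub_apply, Finsupp.single_apply]
          simp
          omega
        rw [e2]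
        ring
      · rw [if_neg (fun hh => h2 (Finsupp.single_le_iff.mp hh))]
        rw [h d (by omega) (by omega)]
        ring

def boxMap (a b : ℕ) : R2 →ₗ[ℂ] (Fin a × Fin b → ℂ) :=
  LinearMap.pi fun ij =>
    coeff (Finsupp.single 0 (ij.1 : ℕ) + Finsupp.single 1 (ij.2 : ℕ))

lemma boxMap_surjective (a b : ℕ) : Function.Surjective (boxMap a b) := by
  intro c
  refine ⟨∑ ij : Fin a × Fin b,
    monomial (Finsupp.single 0 (ij.1 : ℕ) + Finsupp.single 1 (ij.2 : ℕ)) (c ij), ?_⟩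
  funext ij
  simp only [boxMap, LinearMap.pi_apply]
  rw [map_sum, Finset.sum_eq_single ij]
  · rw [coeff_monomial_same]
  · intro kl _ hne
    rw [coeff_monomial, if_neg]
    intro hEq
    apply hne
    have h0 := congrArg (fun d : Fin 2 →₀ ℕ => d 0) hEq
    have h1 := congrArg (fun d : Fin 2 →₀ ℕ => d 1) hEq
    simp [Finsupp.single_apply] at h0 h1
    exact Prod.ext (Fin.ext h0.symm) (Fin.ext h1.symm)
  · intro hmem
    exact absurd (Finset.mem_univ ij) hmem

lemma boxMap_ker (a b : ℕ) :
    LinearMap.ker (boxMap a b) =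
      (Ideal.span {(X 0 ^ a : R2), X 1 ^ b}).restrictScalars ℂ := by
  ext f
  simp only [LinearMap.mem_ker, Submodule.restrictScalars_mem, mem_span_pow_iff]
  constructor
  · intro hf d hd0 hd1
    have := congrFun hf (⟨d 0, hd0⟩, ⟨d 1, hd1⟩)
    simp only [boxMap, LinearMap.pi_apply, Pi.zero_apply] at this
    rw [fin2_decomp d]
    exact this
  · intro hf
    funext ij
    simp only [boxMap, LinearMap.pi_apply, Pi.zero_apply]
    refine hf _ ?_ ?_ <;> simp [Finsupp.single_apply]

lemma edim_span_pow (a b : ℕ) :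
    edim (Ideal.span {(X 0 ^ a : R2), X 1 ^ b}) = (a * b : ℕ) := by
  set I := Ideal.span {(X 0 ^ a : R2), X 1 ^ b}
  have e1 : (R2 ⧸ I.restrictScalars ℂ) ≃ₗ[ℂ] (Fin a × Fin b → ℂ) := by
    rw [← boxMap_ker a b]
    exact (boxMap a b).quotKerEquivOfSurjective (boxMap_surjective a b)
  have e2 : (R2 ⧸ I) ≃ₗ[ℂ] (Fin a × Fin b → ℂ) :=
    (Submodule.Quotient.restrictScalarsEquiv ℂ (I : Submodule R2 R2)).symm.trans e1
  have hr : Module.rank ℂ (R2 ⧸ I) = (a * b : ℕ) := by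
    rw [e2.rank_eq, rank_fun']
    simp
  rw [edim, hr]
  simp

lemma edim_antitone {I J : Ideal R2} (h : I ≤ J) : edim J ≤ edim I := by
  have hs : Function.Surjective
      ((I.restrictScalars ℂ).liftQ ((J.restrictScalars ℂ).mkQ)
        (by intro x hx; simpa using h hx) :
        (R2 ⧸ I.restrictScalars ℂ) →ₗ[ℂ] (R2 ⧸ J.restrictScalars ℂ)) := by
    intro y
    obtain ⟨x, rfl⟩ := Submodule.mkQ_surjective _ y
    exact ⟨Submodule.Quotient.mk x, rfl⟩
  have hr : Module.rank ℂ (R2 ⧸ J) ≤ Module.rank ℂ (R2 ⧸ I) := by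
    rw [(Submodule.Quotient.restrictScalarsEquiv ℂ (J : Submodule R2 R2)).symm.rank_eq,
      (Submodule.Quotient.restrictScalarsEquiv ℂ (I : Submodule R2 R2)).symm.rank_eq]
    exact LinearMap.rank_le_of_surjective _ hs
  exact Cardinal.toENat.monotone' hr

lemma gamSet_bound (α : ℚ) (hα0 : 0 ≤ α) (hα1 : α ≤ 1) (f : R2) (I : Ideal R2) (N : ℕ)
    (hI : edim I ≤ (N : ℕ∞)) :
    ∀ x ∈ ({(1 + (α : ℝ)) ^ 2 * (fdim I : ℝ)} ∪
      {x : ℝ | ∃ g ∈ I, interNum f g ≤ 2 * edim I ∧ x = lam α f I g}),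
      x ≤ (2 * (N:ℝ)) ^ 2 + (1 + (α : ℝ)) ^ 2 * N := by
  have hα0' : (0:ℝ) ≤ (α:ℝ) := by exact_mod_cast hα0
  have hα1' : (α:ℝ) ≤ 1 := by exact_mod_cast hα1
  have hD : (fdim I : ℝ) ≤ N := by
    have h1 : fdim I ≤ N := by
      have := ENat.toNat_le_toNat hI (by simp)
      simpa [fdim] using this
    exact_mod_cast h1
  have hDpos : (0:ℝ) ≤ (fdim I : ℝ) := Nat.cast_nonneg _
  rintro x (rfl | ⟨g, hg, hcond, rfl⟩)
  · nlinarith [sq_nonneg (2*(N:ℝ)), sq_nonneg (1 + (α:ℝ))]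
  · have hn : ((interNum f g).toNat : ℝ) ≤ 2 * N := by
      have h2 : interNum f g ≤ ((2 * N : ℕ) : ℕ∞) := by
        refine le_trans hcond ?_
        calc 2 * edim I ≤ 2 * (N : ℕ∞) := by exact mul_le_mul_right hI 2
          _ = ((2 * N : ℕ) : ℕ∞) := by push_cast; ring
      have h3 := ENat.toNat_le_toNat h2 (ENat.coe_ne_top (2*N))
      simp only [ENat.toNat_coe] at h3
      exact_mod_cast h3
    have hnn : (0:ℝ) ≤ ((interNum f g).toNat : ℝ) := Nat.cast_nonneg _
    set nr : ℝ := ((interNum f g).toNat : ℝ)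
    set Dr : ℝ := (fdim I : ℝ)
    have hBpos : (0:ℝ) ≤ (2 * (N:ℝ)) ^ 2 + (1 + (α : ℝ)) ^ 2 * N := by positivity
    rcases lt_trichotomy (nr - Dr) 0 with hlt | heq | hgt
    · have : lam α f I g ≤ 0 := by
        rw [lam]
        exact div_nonpos_iff.mpr (Or.inl ⟨sq_nonneg _, hlt.le⟩)
      linarith
    · have : lam α f I g = 0 := by
        rw [lam]
        show _ / (nr - Dr) = 0
        rw [heq, div_zero]
      linarith
    · have hge1 : (1:ℝ) ≤ nr - Dr := by
        have : fdim I < (interNum f g).toNat := by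
          by_contra hc
          push_neg at hc
          have : nr ≤ Dr := by simp only [nr, Dr]; exact_mod_cast hc
          linarith
        have : (fdim I : ℝ) + 1 ≤ ((interNum f g).toNat : ℝ) := by exact_mod_cast this
        simp only [nr, Dr]
        linarith
      have hnum : ((α:ℝ) * nr + (1 - (α:ℝ)) * Dr) ^ 2 ≤ (2 * (N:ℝ))^2 := by
        have hcomb : (α:ℝ) * nr + (1 - (α:ℝ)) * Dr ≤ 2 * N := by nlinarith
        have hcombnn : (0:ℝ) ≤ (α:ℝ) * nr + (1 - (α:ℝ)) * Dr := by nlinarith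
        nlinarith
      have : lam α f I g ≤ ((α:ℝ) * nr + (1 - (α:ℝ)) * Dr) ^ 2 := by
        rw [lam]
        show _ / (nr - Dr) ≤ _
        calc _ ≤ (((α:ℝ) * nr + (1 - (α:ℝ)) * Dr) ^ 2) / 1 :=
              div_le_div_of_nonneg_left (sq_nonneg _) (by norm_num) hge1
          _ = _ := div_one _
      nlinarith [sq_nonneg (1 + (α:ℝ))]

/-- For integers `q > p ≥ 3` with `q < 2p`, `f = x^q − y^p` and rational
`0 ≤ α ≤ 1`: `γ_α^{es}(f) ≥ 2·(q − 1 + α)²`. -/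
theorem stmt19 (p q : ℕ) (hp : 3 ≤ p) (hpq : p < q) (hq2p : q < 2 * p)
    (α : ℚ) (hα0 : 0 ≤ α) (hα1 : α ≤ 1) :
    2 * ((q : ℝ) - 1 + α) ^ 2 ≤ gamES p q α (X 0 ^ q - X 1 ^ p) := by
  have hq4 : 4 ≤ q := by omega
  set f : R2 := X 0 ^ q - X 1 ^ p with hf
  set I₀ : Ideal R2 := Ideal.span {(X 0 ^ (q-1) : R2), X 1 ^ 2} with hI₀
  have hcoef : ∀ d : Fin 2 →₀ ℕ, coeff d f =
      (if d = Finsupp.single 0 q then 1 else 0) -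
      (if d = Finsupp.single 1 p then 1 else 0) := by
    intro d
    rw [hf, map_sub, X_pow_eq, X_pow_eq, coeff_monomial, coeff_monomial]
  have hedim0 : edim I₀ = (((q-1)*2 : ℕ) : ℕ∞) := edim_span_pow (q-1) 2
  have hfdim0 : fdim I₀ = (q-1)*2 := by rw [fdim, hedim0, ENat.toNat_coe]
  -- pd 0 f ∈ I₀
  have hpd0 : pd 0 f ∈ I₀ := by
    rw [hI₀, mem_span_pow_iff]
    intro d hd0 hd1
    simp only [coeff_apply, pd]
    rw [show f (d + Finsupp.single 0 1) = coeff (d + Finsupp.single 0 1) f from rfl, hcoef]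
    rw [if_neg, if_neg]
    · ring
    · intro h
      have := DFunLike.congr_fun h 0
      simp [Finsupp.single_apply] at this
    · intro h
      have := DFunLike.congr_fun h 0
      simp [Finsupp.single_apply] at this
      omega
  have hpd1 : pd 1 f ∈ I₀ := by
    rw [hI₀, mem_span_pow_iff]
    intro d hd0 hd1
    simp only [coeff_apply, pd]
    rw [show f (d + Finsupp.single 1 1) = coeff (d + Finsupp.single 1 1) f from rfl, hcoef]
    rw [if_neg, if_neg]
    · ring
    · intro h
      have := DFunLike.congr_fun h 1
      simp [Finsupp.single_apply] at this
      omega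
    · intro h
      have := DFunLike.congr_fun h 1
      simp [Finsupp.single_apply] at this
  have hw : wIdeal p q ≤ I₀ := by
    rw [wIdeal, Ideal.span_le]
    rintro s ⟨β, γ, hwd, rfl⟩
    rw [SetLike.mem_coe, hI₀, mem_span_pow_iff]
    intro d hd0 hd1
    rw [X_pow_eq, X_pow_eq, monomial_mul_monomial, coeff_monomial, if_neg]
    intro h
    have h0 := DFunLike.congr_fun h 0
    have h1 := DFunLike.congr_fun h 1
    simp [Finsupp.single_apply] at h0 h1
    have hβ : β ≤ q - 2 := by omega
    have hγ : γ ≤ 1 := by omega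
    have hkey : p*(q-2) + p*2 = p*q := by
      rw [← Nat.mul_add, Nat.sub_add_cancel (by omega)]
    have hb1 : p*β ≤ p*(q-2) := Nat.mul_le_mul_left p hβ
    have hb2 : q*γ ≤ q*1 := Nat.mul_le_mul_left q hγ
    have : p*q ≤ p*(q-2) + q*1 := le_trans hwd (add_le_add hb1 hb2)
    have : p*2 ≤ q*1 := by linarith
    omega
  have hEsing : Esing p q f ≤ I₀ := by
    rw [Esing]
    refine sup_le ?_ hw
    rw [Ideal.span_le]
    rintro s (rfl | rfl)
    · exact hpd0
    · exact hpd1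
  have hX0 : (X 0 : R2) ∈ mm := Ideal.subset_span (Set.mem_insert _ _)
  have hX1 : (X 1 : R2) ∈ mm := Ideal.subset_span (Set.mem_insert_of_mem _ rfl)
  have hI₀mm : I₀ ≤ mm := by
    rw [hI₀, Ideal.span_le]
    rintro s (rfl | rfl)
    · exact Ideal.pow_mem_of_mem _ hX0 _ (by omega)
    · exact Ideal.pow_mem_of_mem _ hX1 _ (by omega)
  have hCI₀ : IsCI I₀ := by
    refine ⟨?_, X 0 ^ (q-1), X 1 ^ 2, hI₀⟩
    rw [hedim0]
    exact WithTop.coe_lt_top _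
  have hp2 : p - 2 + 2 = p := by omega
  have hspan_eq : Ideal.span {f, (X 1 ^ 2 : R2)} = Ideal.span {(X 0 ^ q : R2), X 1 ^ 2} := by
    apply le_antisymm
    · rw [Ideal.span_le]
      rintro s (rfl | rfl)
      · exact Ideal.mem_span_pair.mpr
          ⟨1, -(X 1 ^ (p-2)), by rw [one_mul, neg_mul, ← pow_add, hp2, hf]; ring⟩
      · exact Ideal.subset_span (Set.mem_insert_of_mem _ rfl)
    · rw [Ideal.span_le]
      rintro s (rfl | rfl)
      · exact Ideal.mem_span_pair.mpr
          ⟨1, X 1 ^ (p-2), by rw [one_mul, ← pow_add, hp2, hf]; ring⟩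
      · exact Ideal.subset_span (Set.mem_insert_of_mem _ rfl)
  have hinter : interNum f (X 1 ^ 2) = ((q*2 : ℕ) : ℕ∞) := by
    rw [interNum, hspan_eq, edim_span_pow]
  have hcond : interNum f (X 1 ^ 2) ≤ 2 * edim I₀ := by
    rw [hinter, hedim0]
    have h2 : (2 : ℕ∞) * (((q-1)*2 : ℕ) : ℕ∞) = ((2*((q-1)*2) : ℕ) : ℕ∞) := by
      push_cast; ring
    rw [h2]
    exact_mod_cast (by omega : q*2 ≤ 2*((q-1)*2))
  have hlam : lam α f I₀ (X 1 ^ 2) = 2 * ((q:ℝ) - 1 + α) ^ 2 := by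
    rw [lam, hinter, hfdim0, ENat.toNat_coe]
    have hc : (((q-1)*2 : ℕ) : ℝ) = ((q:ℝ) - 1) * 2 := by
      rw [Nat.cast_mul, Nat.cast_sub (by omega : 1 ≤ q)]
      norm_num
    have hqc : ((q*2 : ℕ) : ℝ) = (q:ℝ)*2 := by push_cast; ring
    rw [hc, hqc]
    have hden : (q:ℝ)*2 - ((q:ℝ)-1)*2 = 2 := by ring
    rw [hden, div_eq_iff (by norm_num : (2:ℝ) ≠ 0)]
    ring
  have hbdd : BddAbove ({(1 + (α : ℝ)) ^ 2 * (fdim I₀ : ℝ)} ∪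
      {x : ℝ | ∃ g ∈ I₀, interNum f g ≤ 2 * edim I₀ ∧ x = lam α f I₀ g}) :=
    ⟨_, fun y hy => gamSet_bound α hα0 hα1 f I₀ ((q-1)*2) (le_of_eq hedim0) y hy⟩
  have h1 : lam α f I₀ (X 1 ^ 2) ≤ gam α f I₀ := by
    rw [gam]
    exact le_csSup hbdd (Or.inr ⟨X 1 ^ 2,
      Ideal.subset_span (Set.mem_insert_of_mem _ rfl), hcond, rfl⟩)
  have houter : BddAbove ({0} ∪ {x : ℝ | ∃ I : Ideal R2,
      IsCI I ∧ Esing p q f ≤ I ∧ I ≤ mm ∧ x = gam α f I}) := by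
    refine ⟨(2 * ((q*p : ℕ) : ℝ)) ^ 2 + (1 + (α : ℝ)) ^ 2 * ((q*p : ℕ) : ℝ), ?_⟩
    rintro y (rfl | ⟨I, hCI, hEI, hImm, rfl⟩)
    · positivity
    · have hsub : Ideal.span {(X 0 ^ q : R2), X 1 ^ p} ≤ Esing p q f := by
        rw [Ideal.span_le]
        rintro s (rfl | rfl)
        · refine le_sup_right (α := Ideal R2) ?_
          rw [wIdeal]
          exact Ideal.subset_span ⟨q, 0, by simp, by rw [pow_zero, mul_one]⟩
        · refine le_sup_right (α := Ideal R2) ?_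
          rw [wIdeal]
          exact Ideal.subset_span ⟨0, p, by rw [Nat.mul_comm p q]; omega,
            by rw [pow_zero, one_mul]⟩
      have hIle : edim I ≤ ((q*p : ℕ) : ℕ∞) := by
        calc edim I ≤ edim (Ideal.span {(X 0 ^ q : R2), X 1 ^ p}) :=
              edim_antitone (le_trans hsub hEI)
          _ = ((q*p : ℕ) : ℕ∞) := edim_span_pow q p
      rw [gam]
      exact csSup_le ⟨_, Or.inl rfl⟩ (gamSet_bound α hα0 hα1 f I (q*p) hIle)
  have h2 : gam α f I₀ ≤ gamES p q α f := by
    rw [gamES]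
    exact le_csSup houter (Or.inr ⟨I₀, hCI₀, hEsing, hI₀mm, rfl⟩)
  calc 2 * ((q:ℝ) - 1 + α) ^ 2 = lam α f I₀ (X 1 ^ 2) := hlam.symm
    _ ≤ gam α f I₀ := h1
    _ ≤ gamES p q α f := h2

end
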